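/- Let φ : [0,∞) → [0,∞) be locally Lipschitz, nondecreasing, with φ(0) = 0, and assume there exists a constant a > 0 such that ∫_a^∞ dt/√(∫_0^t φ(s) ds) < ∞ (with the convention that the integrand equals +∞ where ∫_0^t φ(s) ds = 0). Then lim_{ρ→∞} ∫_ρ^∞ dt/√(∫_ρ^t φ(s) ds) = 0. -/

import Mathlib

open MeasureTheory Real Filter Set
open scoped ENNReal Topology

section helpers
lemma aux_tail_tendsto_zero {g : ℝ → ℝ≥0∞} {a : ℝ}
    (h : ∫⁻ t in Set.Ioi a, g t < ⊤) :
    Tendsto (fun x => ∫⁻ t in Set.Ioi x, g t) atTop (𝓝 0) := by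
  set ν : Measure ℝ := (volume.restrict (Set.Ioi a)).withDensity g with hν
  have hν_apply : ∀ x, a ≤ x → ν (Set.Ioi x) = ∫⁻ t in Set.Ioi x, g t := by
    intro x hx
    rw [hν, withDensity_apply _ measurableSet_Ioi,
      Measure.restrict_restrict measurableSet_Ioi]
    congr 1
    rw [Set.Ioi_inter_Ioi, max_eq_left hx]
  have hfin : ν (Set.Ioi a) ≠ ⊤ := by rw [hν_apply a le_rfl]; exact h.ne
  have hiInter : (⋂ x : ℝ, Set.Ioi x) = ∅ := by
    ext t; simp only [Set.mem_iInter, Set.mem_Ioi, Set.mem_empty_iff_false, iff_false, not_forall]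
    exact ⟨t, lt_irrefl t⟩
  have h1 : Tendsto (fun x : ℝ => ν (Set.Ioi x)) atTop (𝓝 0) := by
    have := tendsto_measure_iInter_atTop (μ := ν) (s := fun x : ℝ => Set.Ioi x)
      (fun i => measurableSet_Ioi.nullMeasurableSet)
      (fun i j hij => Set.Ioi_subset_Ioi hij) ⟨a, hfin⟩
    rwa [hiInter, measure_empty] at this
  refine h1.congr' ?_
  filter_upwards [eventually_ge_atTop a] with x hx using hν_apply x hx

lemma aux_inv_sqrt_integrable {ρ : ℝ} (hρ : 0 < ρ) :
    IntegrableOn (fun u : ℝ => (Real.sqrt u)⁻¹) (Set.Ioc 0 ρ) := by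
  have hii : IntervalIntegrable (fun u : ℝ => u ^ (-(1/2) : ℝ)) volume 0 ρ :=
    intervalIntegral.intervalIntegrable_rpow' (by norm_num)
  have h1 : IntegrableOn (fun u : ℝ => u ^ (-(1/2) : ℝ)) (Set.Ioc 0 ρ) :=
    (intervalIntegrable_iff_integrableOn_Ioc_of_le hρ.le).mp hii
  refine h1.congr_fun (fun u hu => ?_) measurableSet_Ioc
  rw [Real.sqrt_eq_rpow, ← Real.rpow_neg hu.1.le]

lemma aux_inv_sqrt_integral {ρ : ℝ} (hρ : 0 < ρ) :
    ∫ u in (0:ℝ)..ρ, (Real.sqrt u)⁻¹ = 2 * Real.sqrt ρ := by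
  have heq : Set.EqOn (fun u : ℝ => (Real.sqrt u)⁻¹) (fun u : ℝ => u ^ (-(1/2) : ℝ))
      (Set.uIcc 0 ρ) := by
    intro u hu
    rw [Set.uIcc_of_le hρ.le] at hu
    rcases eq_or_lt_of_le hu.1 with h | h
    · simp [← h]
    · simp only
      rw [Real.sqrt_eq_rpow, ← Real.rpow_neg h.le]
  rw [intervalIntegral.integral_congr heq, integral_rpow (Or.inl (by norm_num))]
  rw [Real.zero_rpow (by norm_num)]
  rw [show (-(1/2) : ℝ) + 1 = 1/2 by norm_num, ← Real.sqrt_eq_rpow]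
  ring

lemma aux_middle {ρ c : ℝ} (hρ : 0 < ρ) (hc : 0 < c) :
    ∫⁻ t in Set.Ioc ρ (2*ρ), (ENNReal.ofReal (Real.sqrt ((t - ρ) * c)))⁻¹
      ≤ ENNReal.ofReal (2 * Real.sqrt ρ * (Real.sqrt c)⁻¹) := by
  have hle : ρ ≤ 2 * ρ := by linarith
  have hshift : IntervalIntegrable (fun t : ℝ => (Real.sqrt (t - ρ))⁻¹) volume ρ (2*ρ) := by
    have h0 : IntervalIntegrable (fun u : ℝ => (Real.sqrt u)⁻¹) volume 0 ρ := by
      rw [intervalIntegrable_iff_integrableOn_Ioc_of_le hρ.le]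
      exact aux_inv_sqrt_integrable hρ
    have := h0.comp_sub_right ρ
    simpa [two_mul] using this
  have hInt : IntegrableOn (fun t : ℝ => (Real.sqrt (t - ρ))⁻¹ * (Real.sqrt c)⁻¹)
      (Set.Ioc ρ (2*ρ)) := by
    exact ((intervalIntegrable_iff_integrableOn_Ioc_of_le hle).mp hshift).mul_const _
  have hcongr : ∫⁻ t in Set.Ioc ρ (2*ρ), (ENNReal.ofReal (Real.sqrt ((t - ρ) * c)))⁻¹
      = ∫⁻ t in Set.Ioc ρ (2*ρ),
        ENNReal.ofReal ((Real.sqrt (t - ρ))⁻¹ * (Real.sqrt c)⁻¹) := by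
    refine setLIntegral_congr_fun measurableSet_Ioc (fun t ht => ?_)
    have h1 : 0 < t - ρ := by linarith [ht.1]
    rw [Real.sqrt_mul h1.le, ← mul_inv, ← ENNReal.ofReal_inv_of_pos (by positivity)]
  rw [hcongr, ← ofReal_integral_eq_lintegral_ofReal hInt
      (ae_of_all _ fun t => by positivity)]
  apply ENNReal.ofReal_le_ofReal
  rw [← intervalIntegral.integral_of_le hle, intervalIntegral.integral_mul_const]
  have : (∫ t in ρ..(2*ρ), (Real.sqrt (t - ρ))⁻¹) = ∫ u in (0:ℝ)..ρ, (Real.sqrt u)⁻¹ := by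
    have := intervalIntegral.integral_comp_sub_right (a := ρ) (b := 2*ρ)
      (fun u : ℝ => (Real.sqrt u)⁻¹) ρ
    simpa [two_mul] using this
  rw [this, aux_inv_sqrt_integral hρ]

lemma aux_inv_le {a b : ℝ≥0∞} (h : a ≤ 2 * b) : b⁻¹ ≤ 2 * a⁻¹ := by
  rcases eq_or_ne a 0 with rfl | ha
  · simp
  · have h2 : a * 2⁻¹ ≤ b := by
      have := mul_le_mul_left h 2⁻¹
      rwa [mul_comm 2 b, mul_assoc, ENNReal.mul_inv_cancel (by norm_num) (by norm_num),
        mul_one] at this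
    calc b⁻¹ ≤ (a * 2⁻¹)⁻¹ := ENNReal.inv_le_inv.mpr h2
      _ = 2 * a⁻¹ := by
          rw [ENNReal.mul_inv (Or.inl ha) (Or.inr (by norm_num)), inv_inv, mul_comm]

lemma aux_sqrt_two_mul (x : ℝ) : Real.sqrt (2 * x) ≤ 2 * Real.sqrt x := by
  rw [Real.sqrt_mul (by norm_num) x]
  nlinarith [Real.sq_sqrt (by norm_num : (0:ℝ) ≤ 2), Real.sqrt_nonneg 2, Real.sqrt_nonneg x]
end helpers

/-- under the finiteness condition, the shifted Keller--Osserman integral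
tends to 0 at ∞. -/
theorem ko_integral_tendsto_zero
    (φ : ℝ → ℝ) (hφ0 : φ 0 = 0)
    (hφmono : MonotoneOn φ (Set.Ici 0))
    (hφnonneg : ∀ t : ℝ, 0 ≤ t → 0 ≤ φ t)
    (hφlip : ∀ x ∈ Set.Ici (0 : ℝ), ∃ K : NNReal, ∃ s ∈ nhdsWithin x (Set.Ici 0),
      LipschitzOnWith K φ s)
    (hKO : ∃ a : ℝ, 0 < a ∧
      ∫⁻ t in Set.Ioi a, (ENNReal.ofReal (Real.sqrt (∫ s in (0:ℝ)..t, φ s)))⁻¹ < ⊤) :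
    Tendsto (fun ρ : ℝ => ∫⁻ t in Set.Ioi ρ,
        (ENNReal.ofReal (Real.sqrt (∫ s in ρ..t, φ s)))⁻¹)
      atTop (nhds 0) := by
  obtain ⟨a, ha, hfin⟩ := hKO
  set F : ℝ → ℝ := fun t => ∫ s in (0:ℝ)..t, φ s with hF
  -- interval integrability of φ on nonneg intervals
  have hint : ∀ c d : ℝ, 0 ≤ c → 0 ≤ d → IntervalIntegrable φ volume c d := by
    intro c d hc hd
    refine (hφmono.mono ?_).intervalIntegrable
    intro x hx
    exact le_trans (le_min hc hd) hx.1
  have hFsub : ∀ c d : ℝ, 0 ≤ c → 0 ≤ d → F d - F c = ∫ s in c..d, φ s := by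
    intro c d hc hd
    exact intervalIntegral.integral_interval_sub_left (hint 0 d le_rfl hd) (hint 0 c le_rfl hc)
  have hFmono : ∀ c d : ℝ, 0 ≤ c → c ≤ d → F c ≤ F d := by
    intro c d hc hcd
    have h0 : 0 ≤ ∫ s in c..d, φ s :=
      intervalIntegral.integral_nonneg hcd (fun x hx => hφnonneg x (hc.trans hx.1))
    have := hFsub c d hc (hc.trans hcd)
    linarith
  -- lower bound for shifted integrals
  have hlow : ∀ ρ t : ℝ, 0 ≤ ρ → ρ ≤ t → (t - ρ) * φ ρ ≤ ∫ s in ρ..t, φ s := by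
    intro ρ t hρ hρt
    have hmb := intervalIntegral.integral_mono_on (μ := volume) hρt
      (intervalIntegrable_const (c := φ ρ)) (hint ρ t hρ (hρ.trans hρt))
      (fun x hx => hφmono (by exact hρ) (hρ.trans hx.1) hx.1)
    simpa [smul_eq_mul, mul_comm] using hmb
  have hup : ∀ ρ : ℝ, 0 ≤ ρ → F ρ ≤ ρ * φ ρ := by
    intro ρ hρ
    have hmb := intervalIntegral.integral_mono_on (μ := volume) hρ
      (hint 0 ρ le_rfl hρ) (intervalIntegrable_const (c := φ ρ))
      (fun x hx => hφmono (by exact hx.1) hρ hx.2)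
    simpa [smul_eq_mul, mul_comm] using hmb
  -- positivity point
  have ht₀ : ∃ t₀, a < t₀ ∧ 0 < F t₀ := by
    by_contra hcon
    push_neg at hcon
    have heqtop : ∫⁻ t in Set.Ioi a, (ENNReal.ofReal (Real.sqrt (F t)))⁻¹
        = ∫⁻ _ in Set.Ioi a, (⊤ : ℝ≥0∞) := by
      refine setLIntegral_congr_fun measurableSet_Ioi (fun t ht => ?_)
      rw [Real.sqrt_eq_zero'.mpr (hcon t ht)]
      simp
    rw [heqtop, setLIntegral_const, Real.volume_Ioi] at hfin
    simp at hfin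
  obtain ⟨t₀, hat₀, hFt₀⟩ := ht₀
  have ht₀pos : 0 < t₀ := ha.trans hat₀
  set T : ℝ → ℝ≥0∞ := fun x => ∫⁻ t in Set.Ioi x, (ENNReal.ofReal (Real.sqrt (F t)))⁻¹ with hT
  have hT0 : Tendsto T atTop (𝓝 0) := aux_tail_tendsto_zero hfin
  -- main estimate
  have hkey : ∀ ρ : ℝ, max t₀ 1 ≤ ρ →
      (∫⁻ t in Set.Ioi ρ, (ENNReal.ofReal (Real.sqrt (∫ s in ρ..t, φ s)))⁻¹)
        ≤ 4 * T (ρ/2) + 2 * T (2*ρ) := by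
    intro ρ hρ
    have hρ1 : (1:ℝ) ≤ ρ := le_trans (le_max_right _ _) hρ
    have hρt₀ : t₀ ≤ ρ := le_trans (le_max_left _ _) hρ
    have hρ0 : (0:ℝ) < ρ := lt_of_lt_of_le one_pos hρ1
    have hFρ : 0 < F ρ := lt_of_lt_of_le hFt₀ (hFmono t₀ ρ ht₀pos.le hρt₀)
    have hφρ : 0 < φ ρ := by nlinarith [hup ρ hρ0.le]
    have hle2 : ρ ≤ 2 * ρ := by linarith
    -- split the integral
    rw [← Set.Ioc_union_Ioi_eq_Ioi hle2, lintegral_union measurableSet_Ioi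
      (Set.Ioc_disjoint_Ioi le_rfl)]
    have hmid : (∫⁻ t in Set.Ioc ρ (2*ρ),
        (ENNReal.ofReal (Real.sqrt (∫ s in ρ..t, φ s)))⁻¹) ≤ 4 * T (ρ/2) := by
      have hpt : ∀ t ∈ Set.Ioc ρ (2*ρ),
          (ENNReal.ofReal (Real.sqrt (∫ s in ρ..t, φ s)))⁻¹
            ≤ (ENNReal.ofReal (Real.sqrt ((t - ρ) * φ ρ)))⁻¹ := fun t ht =>
        ENNReal.inv_le_inv' (ENNReal.ofReal_le_ofReal
          (Real.sqrt_le_sqrt (hlow ρ t hρ0.le ht.1.le)))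
      have h1 := setLIntegral_mono' (μ := volume) measurableSet_Ioc hpt
      have h2 := aux_middle hρ0 hφρ
      have hsφ : 0 < Real.sqrt (φ ρ) := Real.sqrt_pos.mpr hφρ
      have hsF : 0 < Real.sqrt (F ρ) := Real.sqrt_pos.mpr hFρ
      have hsρ : 0 < Real.sqrt ρ := Real.sqrt_pos.mpr hρ0
      have hρeq : Real.sqrt ρ * Real.sqrt ρ = ρ := Real.mul_self_sqrt hρ0.le
      have h3 : 2 * Real.sqrt ρ * (Real.sqrt (φ ρ))⁻¹ ≤ 2 * ρ * (Real.sqrt (F ρ))⁻¹ := by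
        have hs1 : Real.sqrt (F ρ) ≤ Real.sqrt ρ * Real.sqrt (φ ρ) := by
          rw [← Real.sqrt_mul hρ0.le]
          exact Real.sqrt_le_sqrt (hup ρ hρ0.le)
        rw [show 2 * Real.sqrt ρ * (Real.sqrt (φ ρ))⁻¹
            = (2 * Real.sqrt ρ) / (Real.sqrt (φ ρ)) by ring,
          show 2 * ρ * (Real.sqrt (F ρ))⁻¹ = (2 * ρ) / (Real.sqrt (F ρ)) by ring,
          div_le_div_iff₀ hsφ hsF]
        nlinarith [hs1, hsρ, hρeq]
      have hTlow : ENNReal.ofReal (ρ/2) * (ENNReal.ofReal (Real.sqrt (F ρ)))⁻¹ ≤ T (ρ/2) := by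
        have hstep : ∀ t ∈ Set.Ioc (ρ/2) ρ, (ENNReal.ofReal (Real.sqrt (F ρ)))⁻¹
            ≤ (ENNReal.ofReal (Real.sqrt (F t)))⁻¹ := fun t ht =>
          ENNReal.inv_le_inv' (ENNReal.ofReal_le_ofReal
            (Real.sqrt_le_sqrt (hFmono t ρ (by linarith [ht.1]) ht.2)))
        calc ENNReal.ofReal (ρ/2) * (ENNReal.ofReal (Real.sqrt (F ρ)))⁻¹
            = (ENNReal.ofReal (Real.sqrt (F ρ)))⁻¹ * volume (Set.Ioc (ρ/2) ρ) := by
              rw [Real.volume_Ioc, show ρ - ρ/2 = ρ/2 by ring, mul_comm]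
          _ = ∫⁻ _ in Set.Ioc (ρ/2) ρ, (ENNReal.ofReal (Real.sqrt (F ρ)))⁻¹ :=
              (setLIntegral_const _ _).symm
          _ ≤ ∫⁻ t in Set.Ioc (ρ/2) ρ, (ENNReal.ofReal (Real.sqrt (F t)))⁻¹ :=
              setLIntegral_mono' measurableSet_Ioc hstep
          _ ≤ T (ρ/2) := lintegral_mono_set Set.Ioc_subset_Ioi_self
      have h4 : ENNReal.ofReal (2 * ρ * (Real.sqrt (F ρ))⁻¹) ≤ 4 * T (ρ/2) := by
        have heq : ENNReal.ofReal (2 * ρ * (Real.sqrt (F ρ))⁻¹)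
            = 4 * (ENNReal.ofReal (ρ/2) * (ENNReal.ofReal (Real.sqrt (F ρ)))⁻¹) := by
          rw [ENNReal.ofReal_mul (by positivity), ENNReal.ofReal_inv_of_pos hsF, ← mul_assoc]
          congr 1
          rw [show (2*ρ : ℝ) = 4 * (ρ/2) by ring, ENNReal.ofReal_mul (by norm_num)]
          norm_num
        rw [heq]
        exact mul_le_mul_right hTlow 4
      exact le_trans h1 (le_trans h2 (le_trans (ENNReal.ofReal_le_ofReal h3) h4))
    have htail : (∫⁻ t in Set.Ioi (2*ρ),
        (ENNReal.ofReal (Real.sqrt (∫ s in ρ..t, φ s)))⁻¹) ≤ 2 * T (2*ρ) := by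
      have hpt : ∀ t ∈ Set.Ioi (2*ρ), (ENNReal.ofReal (Real.sqrt (∫ s in ρ..t, φ s)))⁻¹
          ≤ 2 * (ENNReal.ofReal (Real.sqrt (F t)))⁻¹ := by
        intro t ht
        have ht' : 2*ρ < t := ht
        have e1 : (∫ s in ρ..t, φ s) = F t - F ρ := (hFsub ρ t hρ0.le (by linarith)).symm
        have e2 : F ρ ≤ F t - F ρ := by
          have h1 : F ρ ≤ ρ * φ ρ := hup ρ hρ0.le
          have h2 : (2*ρ - ρ) * φ ρ ≤ ∫ s in ρ..(2*ρ), φ s := hlow ρ (2*ρ) hρ0.le hle2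
          have h3 : (∫ s in ρ..(2*ρ), φ s) = F (2*ρ) - F ρ :=
            (hFsub ρ (2*ρ) hρ0.le (by linarith)).symm
          have h4 : F (2*ρ) ≤ F t := hFmono (2*ρ) t (by linarith) ht'.le
          nlinarith
        have e3 : Real.sqrt (F t) ≤ 2 * Real.sqrt (F t - F ρ) :=
          calc Real.sqrt (F t) ≤ Real.sqrt (2 * (F t - F ρ)) :=
                Real.sqrt_le_sqrt (by linarith)
            _ ≤ 2 * Real.sqrt (F t - F ρ) := aux_sqrt_two_mul _
        rw [e1]
        apply aux_inv_le
        calc ENNReal.ofReal (Real.sqrt (F t))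
            ≤ ENNReal.ofReal (2 * Real.sqrt (F t - F ρ)) := ENNReal.ofReal_le_ofReal e3
          _ = 2 * ENNReal.ofReal (Real.sqrt (F t - F ρ)) := by
              rw [ENNReal.ofReal_mul (by norm_num)]; norm_num
      calc (∫⁻ t in Set.Ioi (2*ρ), (ENNReal.ofReal (Real.sqrt (∫ s in ρ..t, φ s)))⁻¹)
          ≤ ∫⁻ t in Set.Ioi (2*ρ), 2 * (ENNReal.ofReal (Real.sqrt (F t)))⁻¹ :=
            setLIntegral_mono' measurableSet_Ioi hpt
        _ = 2 * T (2*ρ) := lintegral_const_mul' _ _ (by norm_num)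
    exact add_le_add hmid htail
  -- squeeze
  have hhalf : Tendsto (fun ρ : ℝ => ρ/2) atTop atTop := by
    apply Filter.tendsto_atTop_atTop.mpr
    exact fun b => ⟨2*b, fun x hx => by linarith⟩
  have hdouble : Tendsto (fun ρ : ℝ => 2*ρ) atTop atTop := by
    apply Filter.tendsto_atTop_atTop.mpr
    exact fun b => ⟨max b 0, fun x hx => by
      have h1 : b ≤ x := le_trans (le_max_left _ _) hx
      have h2 : (0:ℝ) ≤ x := le_trans (le_max_right _ _) hx
      linarith⟩
  have hupper : Tendsto (fun ρ : ℝ => 4 * T (ρ/2) + 2 * T (2*ρ)) atTop (𝓝 0) := by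
    have h1 : Tendsto (fun ρ : ℝ => 4 * T (ρ/2)) atTop (𝓝 0) := by
      have := ENNReal.Tendsto.const_mul (hT0.comp hhalf) (Or.inr (by norm_num : (4:ℝ≥0∞) ≠ ⊤))
      simpa using this
    have h2 : Tendsto (fun ρ : ℝ => 2 * T (2*ρ)) atTop (𝓝 0) := by
      have := ENNReal.Tendsto.const_mul (hT0.comp hdouble) (Or.inr (by norm_num : (2:ℝ≥0∞) ≠ ⊤))
      simpa using this
    simpa using h1.add h2
  refine tendsto_of_tendsto_of_tendsto_of_le_of_le' tendsto_const_nhds hupper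
    (Eventually.of_forall fun ρ => zero_le) ?_
  filter_upwards [eventually_ge_atTop (max t₀ 1)] with ρ hρ using hkey ρ hρ
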